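/- Let z = e^{2πi/3} and φ = (1+√5)/2. The 4×4 Hermitian matrix with ones on the diagonal, H_{12} = H_{23} = 1/(z-1), H_{34} = φ/(z-1), other off-diagonal entries zero, has signature (3,1), while the Galois conjugate obtained by replacing φ with (1-√5)/2 is positive definite. -/

import Mathlib

open Matrix
open scoped ComplexOrder

/-- A Hermitian matrix has signature `(p, n)` if it has `p` positive and `n`
negative eigenvalues (counted with multiplicity). -/
def HasSignature {m : ℕ} (M : Matrix (Fin m) (Fin m) ℂ) (p n : ℕ) : Prop :=
  ∃ hM : M.IsHermitian,
    (Finset.univ.filter fun i => 0 < hM.eigenvalues i).card = p ∧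
    (Finset.univ.filter fun i => hM.eigenvalues i < 0).card = n

namespace G30Aux

lemma posdef_conj {n : Type*} [Fintype n] [DecidableEq n] {D U : Matrix n n ℂ}
    (hD : D.PosDef) (hU : IsUnit U.det) : (Uᴴ * D * U).PosDef := by
  refine Matrix.PosDef.of_dotProduct_mulVec_pos (Matrix.isHermitian_conjTranspose_mul_mul U hD.1) fun x hx => ?_
  have hinj : Function.Injective U.mulVec :=
    Matrix.mulVec_injective_iff_isUnit.mpr ((Matrix.isUnit_iff_isUnit_det _).2 hU)
  have hx' : U *ᵥ x ≠ 0 := fun h0 => hx (hinj (by simpa using h0))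
  have h := hD.dotProduct_mulVec_pos hx'
  calc (0:ℂ) < star (U *ᵥ x) ⬝ᵥ (D *ᵥ (U *ᵥ x)) := h
    _ = star x ⬝ᵥ ((Uᴴ * D * U) *ᵥ x) := by
        rw [star_mulVec, ← Matrix.dotProduct_mulVec, Matrix.mulVec_mulVec, Matrix.mulVec_mulVec]

lemma count_aux (lam : Fin 4 → ℝ) (hsum : ∑ i, lam i = 4) (hprod : ∏ i, lam i < 0)
    (hbd : ∀ i, lam i < 3) :
    (Finset.univ.filter fun i => 0 < lam i).card = 3 ∧
    (Finset.univ.filter fun i => lam i < 0).card = 1 := by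
  have hne : ∀ i, lam i ≠ 0 := by
    intro i h
    rw [Finset.prod_eq_zero (Finset.mem_univ i) h] at hprod
    exact lt_irrefl _ hprod
  rw [Fin.prod_univ_four] at hprod
  rw [Fin.sum_univ_four] at hsum
  have hb0 := hbd 0; have hb1 := hbd 1; have hb2 := hbd 2; have hb3 := hbd 3
  obtain h1 | h1 := (hne 0).lt_or_gt <;> obtain h2 | h2 := (hne 1).lt_or_gt <;>
    obtain h3 | h3 := (hne 2).lt_or_gt <;> obtain h4 | h4 := (hne 3).lt_or_gt <;>
    first
    | (exfalso; nlinarith [mul_pos (mul_pos (mul_pos h1 h2) h3) h4])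
    | (exfalso; nlinarith [mul_pos (mul_pos_of_neg_of_neg h1 h2) (mul_pos h3 h4)])
    | (exfalso; nlinarith [mul_pos (mul_pos_of_neg_of_neg h1 h3) (mul_pos h2 h4)])
    | (exfalso; nlinarith [mul_pos (mul_pos_of_neg_of_neg h1 h4) (mul_pos h2 h3)])
    | (exfalso; nlinarith [mul_pos (mul_pos_of_neg_of_neg h2 h3) (mul_pos h1 h4)])
    | (exfalso; nlinarith [mul_pos (mul_pos_of_neg_of_neg h2 h4) (mul_pos h1 h3)])
    | (exfalso; nlinarith [mul_pos (mul_pos_of_neg_of_neg h3 h4) (mul_pos h1 h2)])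
    | (exfalso; linarith)
    | exact ⟨by (rw [Finset.card_filter, Fin.sum_univ_four]; simp [h1, h2, h3, h4, h1.asymm, h2.asymm, h3.asymm, h4.asymm]), by (rw [Finset.card_filter, Fin.sum_univ_four]; simp [h1, h2, h3, h4, h1.asymm, h2.asymm, h3.asymm, h4.asymm])⟩

noncomputable def Mat (A B : ℂ) (r : ℝ) : Matrix (Fin 4) (Fin 4) ℂ :=
  !![1, A, 0, 0; B, 1, A, 0; 0, B, 1, (r:ℂ)*A; 0, 0, (r:ℂ)*B, 1]

noncomputable def NMat (A B : ℂ) (r : ℝ) : Matrix (Fin 4) (Fin 4) ℂ :=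
  !![2, -A, 0, 0; -B, 2, -A, 0; 0, -B, 2, -((r:ℂ)*A); 0, 0, -((r:ℂ)*B), 2]

lemma mat_herm (A B : ℂ) (r : ℝ) (hBA : B = (starRingEnd ℂ) A) : (Mat A B r).IsHermitian := by
  rw [Matrix.IsHermitian]
  ext i j
  fin_cases i <;> fin_cases j <;>
    simp [Mat, Matrix.conjTranspose_apply, hBA, _root_.map_mul, Complex.conj_ofReal,
      Matrix.vecHead, Matrix.vecTail]

lemma mat_decomp (A B : ℂ) (r : ℝ) (hAB : A * B = 1/3) (hBA : B = (starRingEnd ℂ) A) :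
    Mat A B r =
      (!![1, A, 0, 0; 0, 1, (3/2)*A, 0; 0, 0, 1, 2*(r:ℂ)*A; 0, 0, 0, 1])ᴴ *
      (Matrix.diagonal (fun i => ((![1, 2/3, 1/2, 1 - 2*r^2/3] i : ℝ) : ℂ))) *
      (!![1, A, 0, 0; 0, 1, (3/2)*A, 0; 0, 0, 1, 2*(r:ℂ)*A; 0, 0, 0, 1]) := by
  subst hBA
  ext i j
  fin_cases i <;> fin_cases j <;>
    simp [Mat, Matrix.mul_apply, Fin.sum_univ_four, Matrix.conjTranspose_apply,
      Matrix.diagonal, Matrix.vecHead, Matrix.vecTail, Complex.conj_ofReal, map_ofNat,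
      mul_comm] <;>
    push_cast <;>
    first
    | ring1
    | linear_combination -hAB
    | linear_combination hAB
    | linear_combination (-3/2 : ℂ) * hAB
    | linear_combination (3/2 : ℂ) * hAB
    | linear_combination (-2 : ℂ)*(r:ℂ)^2 * hAB
    | linear_combination (2 : ℂ)*(r:ℂ)^2 * hAB

lemma nmat_decomp (A B : ℂ) (r : ℝ) (hAB : A * B = 1/3) (hBA : B = (starRingEnd ℂ) A) :
    NMat A B r =
      (!![1, -(A/2), 0, 0; 0, 1, -((6/11)*A), 0; 0, 0, 1, -((11/20)*(r:ℂ)*A); 0, 0, 0, 1])ᴴ *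
      (Matrix.diagonal (fun i => ((![2, 11/6, 20/11, 2 - 11*r^2/60] i : ℝ) : ℂ))) *
      (!![1, -(A/2), 0, 0; 0, 1, -((6/11)*A), 0; 0, 0, 1, -((11/20)*(r:ℂ)*A); 0, 0, 0, 1]) := by
  subst hBA
  ext i j
  fin_cases i <;> fin_cases j <;>
    simp [NMat, Matrix.mul_apply, Fin.sum_univ_four, Matrix.conjTranspose_apply,
      Matrix.diagonal, Matrix.vecHead, Matrix.vecTail, Complex.conj_ofReal, map_ofNat,
      mul_comm] <;>
    push_cast <;>
    first
    | ring1
    | linear_combination (-1/2 : ℂ) * hAB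
    | linear_combination (1/2 : ℂ) * hAB
    | linear_combination (-6/11 : ℂ) * hAB
    | linear_combination (6/11 : ℂ) * hAB
    | linear_combination (-11/20 : ℂ)*(r:ℂ)^2 * hAB
    | linear_combination (11/20 : ℂ)*(r:ℂ)^2 * hAB

lemma nmat_eq (A B : ℂ) (r : ℝ) :
    NMat A B r = (3:ℂ) • (1 : Matrix (Fin 4) (Fin 4) ℂ) - Mat A B r := by
  ext i j
  fin_cases i <;> fin_cases j <;>
    simp [Mat, NMat, Matrix.one_apply, Matrix.vecHead, Matrix.vecTail] <;> norm_num

lemma mat_det (A B : ℂ) (r : ℝ) (hAB : A * B = 1/3) :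
    (Mat A B r).det = ((1:ℂ)/3 - 2*(r:ℂ)^2/9) := by
  rw [Mat]
  simp [Matrix.det_succ_row_zero, Fin.sum_univ_succ, Matrix.vecHead, Matrix.vecTail,
    Matrix.det_fin_three, Fin.succAbove]
  push_cast
  linear_combination ((-2:ℂ) - (r:ℂ)^2 + (r:ℂ)^2*(A*B + 1/3)) * hAB

lemma mat_trace (A B : ℂ) (r : ℝ) : (Mat A B r).trace = 4 := by
  simp [Mat, Matrix.trace, Fin.sum_univ_four, Matrix.diag, Matrix.vecHead, Matrix.vecTail]
  norm_num

lemma trace_eq_sum_eig {M : Matrix (Fin 4) (Fin 4) ℂ} (hM : M.IsHermitian) :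
    M.trace = ∑ i, (hM.eigenvalues i : ℂ) := by
  conv_lhs => rw [hM.spectral_theorem]
  rw [Unitary.conjStarAlgAut_apply, Matrix.trace_mul_cycle]
  have h1 : (star (hM.eigenvectorUnitary : Matrix (Fin 4) (Fin 4) ℂ)) *
      (hM.eigenvectorUnitary : Matrix (Fin 4) (Fin 4) ℂ) = 1 := hM.eigenvectorUnitary.2.1
  rw [h1, Matrix.one_mul, Matrix.trace_diagonal]
  simp

lemma real_smul_pi (r : ℝ) (v : Fin 4 → ℂ) : r • v = (r : ℂ) • v := by
  ext j; simp [Complex.real_smul]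

lemma eig_lt {M : Matrix (Fin 4) (Fin 4) ℂ} (hM : M.IsHermitian)
    (hN : ((3:ℂ) • (1 : Matrix (Fin 4) (Fin 4) ℂ) - M).PosDef) (i : Fin 4) :
    hM.eigenvalues i < 3 := by
  set v : Fin 4 → ℂ := ⇑(hM.eigenvectorBasis i) with hv
  have hv0 : v ≠ 0 := by
    intro h
    exact hM.eigenvectorBasis.orthonormal.ne_zero i (by ext j; exact congrFun h j)
  have hmv : M *ᵥ v = ((hM.eigenvalues i : ℂ)) • v := by
    rw [← real_smul_pi]
    exact hM.mulVec_eigenvectorBasis i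
  have hvv : star v ⬝ᵥ v = 1 := by
    have h1 : ‖hM.eigenvectorBasis i‖ = 1 := hM.eigenvectorBasis.orthonormal.1 i
    have h2 : (inner ℂ (hM.eigenvectorBasis i) (hM.eigenvectorBasis i) : ℂ) = 1 := by
      rw [inner_self_eq_norm_sq_to_K, h1]; norm_num
    rw [EuclideanSpace.inner_eq_star_dotProduct, dotProduct_comm] at h2
    exact h2
  have hx := hN.dotProduct_mulVec_pos hv0
  rw [Matrix.sub_mulVec, Matrix.smul_mulVec, Matrix.one_mulVec, hmv,
    dotProduct_sub, dotProduct_smul, dotProduct_smul, hvv] at hx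
  simp only [smul_eq_mul, mul_one] at hx
  have hx' : (0:ℂ) < ((3 - hM.eigenvalues i : ℝ) : ℂ) := by
    rw [show (((3 - hM.eigenvalues i : ℝ)) : ℂ) = 3 - (hM.eigenvalues i : ℂ) by push_cast; ring]
    exact hx
  rw [Complex.zero_lt_real] at hx'
  linarith

lemma diag_posdef (d : Fin 4 → ℝ) (hd : ∀ i, 0 < d i) :
    (Matrix.diagonal (fun i => ((d i : ℝ) : ℂ))).PosDef :=
  Matrix.PosDef.diagonal fun i => by
    rw [Complex.zero_lt_real]; exact hd i

lemma tri_det (a b c : ℂ) :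
    (!![1, a, 0, 0; 0, 1, b, 0; 0, 0, 1, c; 0, 0, 0, 1] : Matrix (Fin 4) (Fin 4) ℂ).det = 1 := by
  simp [Matrix.det_succ_row_zero, Fin.sum_univ_succ, Matrix.vecHead, Matrix.vecTail,
    Matrix.det_fin_three, Fin.succAbove]

theorem aux_main (A B : ℂ) (hAB : A * B = 1/3) (hBA : B = (starRingEnd ℂ) A) :
    HasSignature (Mat A B ((1 + Real.sqrt 5)/2)) 3 1 ∧
    (Mat A B ((1 - Real.sqrt 5)/2)).PosDef := by
  have hs0 : 0 < Real.sqrt 5 := Real.sqrt_pos.mpr (by norm_num)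
  have hs2 : Real.sqrt 5 ^ 2 = 5 := Real.sq_sqrt (by norm_num)
  have hs3 : Real.sqrt 5 < 3 := by nlinarith
  have hs1 : 2 < Real.sqrt 5 := by nlinarith
  constructor
  · -- signature (3,1)
    set r : ℝ := (1 + Real.sqrt 5)/2 with hr
    have hM : (Mat A B r).IsHermitian := mat_herm A B r hBA
    refine ⟨hM, ?_⟩
    have hNpos : ((3:ℂ) • (1 : Matrix (Fin 4) (Fin 4) ℂ) - Mat A B r).PosDef := by
      rw [← nmat_eq, nmat_decomp A B r hAB hBA]
      refine posdef_conj (diag_posdef _ ?_) (by rw [tri_det]; exact isUnit_one)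
      intro i
      fin_cases i <;> simp <;> nlinarith
    have hbd : ∀ i, hM.eigenvalues i < 3 := eig_lt hM hNpos
    have hsum : ∑ i, hM.eigenvalues i = 4 := by
      have h1 := trace_eq_sum_eig hM
      rw [mat_trace] at h1
      have : ((∑ i, hM.eigenvalues i : ℝ) : ℂ) = ((4:ℝ) : ℂ) := by
        push_cast
        rw [← h1]
      exact_mod_cast this
    have hprod : ∏ i, hM.eigenvalues i < 0 := by
      have h1 := hM.det_eq_prod_eigenvalues
      rw [mat_det A B r hAB] at h1
      have h2 : ((∏ i, hM.eigenvalues i : ℝ) : ℂ) = ((1/3 - 2*r^2/9 : ℝ) : ℂ) := by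
        push_cast
        exact h1.symm
      have h3 : (∏ i, hM.eigenvalues i : ℝ) = 1/3 - 2*r^2/9 := by exact_mod_cast h2
      rw [h3, hr]
      nlinarith
    exact count_aux _ hsum hprod hbd
  · set r : ℝ := (1 - Real.sqrt 5)/2 with hr
    rw [mat_decomp A B r hAB hBA]
    refine posdef_conj (diag_posdef _ ?_) (by rw [tri_det]; exact isUnit_one)
    intro i
    fin_cases i <;> simp <;> nlinarith

end G30Aux

/-- The Hermitian form for `𝒞(G₃₀,3)`: with `z = e^{2πi/3}` and `φ = (1+√5)/2` it has
signature `(3,1)`, while the Galois conjugate with `φ` replaced by `(1-√5)/2` is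
positive definite. -/
theorem g30_form_signature
    (z : ℂ) (hz : z = Complex.exp (2 * Real.pi * Complex.I / 3))
    (H : ℂ → Matrix (Fin 4) (Fin 4) ℂ)
    (hH : ∀ φ : ℂ, H φ =
      !![1, 1/(z-1), 0, 0;
         1/((starRingEnd ℂ) z - 1), 1, 1/(z-1), 0;
         0, 1/((starRingEnd ℂ) z - 1), 1, φ/(z-1);
         0, 0, (starRingEnd ℂ) (φ/(z-1)), 1]) :
    HasSignature (H ((1 + Real.sqrt 5) / 2)) 3 1 ∧
    (H ((1 - Real.sqrt 5) / 2)).PosDef := by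
  have hz3 : (z - 1) * ((starRingEnd ℂ) z - 1) = 3 := by
    have hz' : z = Complex.cos (2*Real.pi/3 : ℝ) + Complex.sin (2*Real.pi/3 : ℝ) * Complex.I := by
      rw [hz, ← Complex.exp_mul_I]
      congr 1
      push_cast
      ring
    rw [← Complex.ofReal_cos, ← Complex.ofReal_sin] at hz'
    have hc : Real.cos (2*Real.pi/3) = -(1/2) := by
      have h : 2*Real.pi/3 = Real.pi - Real.pi/3 := by ring
      rw [h, Real.cos_pi_sub, Real.cos_pi_div_three]
    have hs : Real.sin (2*Real.pi/3)^2 = 3/4 := by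
      have h := Real.sin_sq_add_cos_sq (2*Real.pi/3)
      rw [hc] at h
      nlinarith
    have hcC : ((Real.cos (2*Real.pi/3) : ℝ) : ℂ) = -(1/2) := by rw [hc]; push_cast; ring
    have hsC : ((Real.sin (2*Real.pi/3) : ℝ) : ℂ)^2 = 3/4 := by
      rw [← Complex.ofReal_pow, hs]; push_cast; ring
    rw [hz']
    simp only [map_add, _root_.map_mul, Complex.conj_ofReal, Complex.conj_I]
    linear_combination (-((Real.sin (2*Real.pi/3) : ℝ) : ℂ)^2) * Complex.I_sq +
      (((Real.cos (2*Real.pi/3) : ℝ) : ℂ) - 5/2) * hcC + hsC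
  have hAB : (1/(z-1) : ℂ) * (1/((starRingEnd ℂ) z - 1)) = 1/3 := by
    rw [div_mul_div_comm, one_mul, hz3]
  have hBA : (1/((starRingEnd ℂ) z - 1) : ℂ) = (starRingEnd ℂ) (1/(z-1)) := by
    simp [map_div₀]
  have hmain := G30Aux.aux_main (1/(z-1)) (1/((starRingEnd ℂ) z - 1)) hAB hBA
  have hH1 : H ((1 + Real.sqrt 5) / 2) =
      G30Aux.Mat (1/(z-1)) (1/((starRingEnd ℂ) z - 1)) ((1 + Real.sqrt 5)/2) := by
    rw [hH]
    unfold G30Aux.Mat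
    ext i j
    fin_cases i <;> fin_cases j <;>
      simp [Matrix.vecHead, Matrix.vecTail, map_div₀, map_add, map_ofNat,
        Complex.conj_ofReal] <;>
      push_cast <;> ring
  have hH2 : H ((1 - Real.sqrt 5) / 2) =
      G30Aux.Mat (1/(z-1)) (1/((starRingEnd ℂ) z - 1)) ((1 - Real.sqrt 5)/2) := by
    rw [hH]
    unfold G30Aux.Mat
    ext i j
    fin_cases i <;> fin_cases j <;>
      simp [Matrix.vecHead, Matrix.vecTail, map_div₀, map_add, map_ofNat,
        Complex.conj_ofReal] <;>
      push_cast <;> ring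
  rw [hH1, hH2]
  exact hmain
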